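/- The graph Z_{2n,2n} contains Y_{n,n} as an induced subgraph, and Y_{2n,2n} contains Z_{n,n} as an induced subgraph; moreover, Z_{n,n} embeds into Y_{2n,2n} avoiding all vertices of the bottom row (row 1) of Y_{2n,2n}. -/

import Mathlib

/-- Edge relation of the Z-grid, in 1-indexed coordinates. -/
def Zrel (i j i' j' : ℕ) : Prop :=
  (Odd i ∧ i' = i + 1 ∧ j' < j) ∨
  (Even i ∧ i' = i + 1 ∧ j ≤ j') ∨
  (Even i ∧ Odd i' ∧ i + 3 ≤ i')

/-- The Z-grid `Z_{m,k}`: vertex `(i,j)` denotes `z_{i+1,j+1}` (1-indexed). -/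
def Zgrid (m k : ℕ) : SimpleGraph (Fin m × Fin k) :=
  SimpleGraph.fromRel (fun u v =>
    Zrel (u.1.val + 1) (u.2.val + 1) (v.1.val + 1) (v.2.val + 1))

/-- Edge relation of the Y-grid, in 1-indexed coordinates. -/
def Yrel (i j i' j' : ℕ) : Prop :=
  (Odd i ∧ i' = i + 1 ∧ j' ≤ j) ∨
  (Even i ∧ i' = i + 1 ∧ j < j') ∨
  (Even i ∧ Odd i' ∧ i + 3 ≤ i') ∨
  (Odd i ∧ i = i' + 1 ∧ j = 1)

/-- The Y-grid `Y_{m,k}`: vertex `(i,j)` denotes `y_{i+1,j+1}` (1-indexed). -/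
def Ygrid (m k : ℕ) : SimpleGraph (Fin m × Fin k) :=
  SimpleGraph.fromRel (fun u v =>
    Yrel (u.1.val + 1) (u.2.val + 1) (v.1.val + 1) (v.2.val + 1))

/-! ### Auxiliary definitions and lemmas -/

/-- Arithmetic (mod-two) version of `Zrel`. -/
def ZrelN (i j i' j' : ℕ) : Prop :=
  (i % 2 = 1 ∧ i' = i + 1 ∧ j' < j) ∨ (i % 2 = 0 ∧ i' = i + 1 ∧ j ≤ j') ∨
  (i % 2 = 0 ∧ i' % 2 = 1 ∧ i + 3 ≤ i')

/-- Arithmetic (mod-two) version of `Yrel`. -/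
def YrelN (i j i' j' : ℕ) : Prop :=
  (i % 2 = 1 ∧ i' = i + 1 ∧ j' ≤ j) ∨ (i % 2 = 0 ∧ i' = i + 1 ∧ j < j') ∨
  (i % 2 = 0 ∧ i' % 2 = 1 ∧ i + 3 ≤ i') ∨ (i % 2 = 1 ∧ i = i' + 1 ∧ j = 1)

lemma zrel_eq (i j i' j' : ℕ) : Zrel i j i' j' ↔ ZrelN i j i' j' := by
  simp [Zrel, ZrelN, Nat.odd_iff, Nat.even_iff]

lemma yrel_eq (i j i' j' : ℕ) : Yrel i j i' j' ↔ YrelN i j i' j' := by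
  simp [Yrel, YrelN, Nat.odd_iff, Nat.even_iff]

/-- Row of the image of `(p,q)` under the embedding `Y_{n,n} ↪ Z_{2n,2n}` (0-indexed). -/
def yzr (n p q : ℕ) : ℕ :=
  if q ≠ 0 then p else if p = 0 then 0 else if p % 2 = 1 then p
  else if p + 1 = n then n - 3 else p + 2

/-- Column of the image of `(p,q)` under the embedding `Y_{n,n} ↪ Z_{2n,2n}` (0-indexed). -/
def yzc (n p q : ℕ) : ℕ :=
  if q ≠ 0 then n + q - (p + 1) else if p = 0 then 1 else if p % 2 = 1 then 0
  else if p + 1 = n then n + 2 else 0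

/-- Row of the image of `(p,q)` under the embedding `Z_{n,n} ↪ Y_{2n,2n}` (0-indexed). -/
def zyr (n p q : ℕ) : ℕ := if n = 1 then 1 else p + 2

/-- Column of the image of `(p,q)` under the embedding `Z_{n,n} ↪ Y_{2n,2n}` (0-indexed). -/
def zyc (n p q : ℕ) : ℕ := if n = 1 then 1 else p + q + 1

lemma yz_spec (n p q : ℕ) (hp : p < n) :
    (q ≠ 0 ∧ yzr n p q = p ∧ yzc n p q + p + 1 = n + q) ∨
    (q = 0 ∧ p = 0 ∧ yzr n p q = 0 ∧ yzc n p q = 1) ∨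
    (q = 0 ∧ p ≠ 0 ∧ p % 2 = 1 ∧ yzr n p q = p ∧ yzc n p q = 0) ∨
    (q = 0 ∧ p ≠ 0 ∧ p % 2 = 0 ∧ p + 1 = n ∧ yzr n p q = n - 3 ∧ yzc n p q = n + 2) ∨
    (q = 0 ∧ p ≠ 0 ∧ p % 2 = 0 ∧ p + 1 ≠ n ∧ yzr n p q = p + 2 ∧ yzc n p q = 0) := by
  unfold yzr yzc
  split_ifs <;> simp_all <;> omega

set_option maxHeartbeats 4000000 in
theorem yz_adj (n p q p' q' : ℕ) (hp : p < n) (hq : q < n) (hp' : p' < n) (hq' : q' < n) :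
    ((¬(yzr n p q = yzr n p' q' ∧ yzc n p q = yzc n p' q')) ∧
      (ZrelN (yzr n p q + 1) (yzc n p q + 1) (yzr n p' q' + 1) (yzc n p' q' + 1) ∨
       ZrelN (yzr n p' q' + 1) (yzc n p' q' + 1) (yzr n p q + 1) (yzc n p q + 1))) ↔
    ((¬(p = p' ∧ q = q')) ∧
      (YrelN (p + 1) (q + 1) (p' + 1) (q' + 1) ∨ YrelN (p' + 1) (q' + 1) (p + 1) (q + 1))) := by
  have A := yz_spec n p q hp
  have B := yz_spec n p' q' hp'
  simp only [ZrelN, YrelN]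
  have h2 : p % 2 = 0 ∨ p % 2 = 1 := Nat.mod_two_eq_zero_or_one p
  have h3 : p' % 2 = 0 ∨ p' % 2 = 1 := Nat.mod_two_eq_zero_or_one p'
  rcases A with ⟨a1,a2,a3⟩|⟨a1,a4,a2,a3⟩|⟨a1,a4,a5,a2,a3⟩|⟨a1,a4,a5,a6,a2,a3⟩|⟨a1,a4,a5,a6,a2,a3⟩ <;>
  rcases B with ⟨b1,b2,b3⟩|⟨b1,b4,b2,b3⟩|⟨b1,b4,b5,b2,b3⟩|⟨b1,b4,b5,b6,b2,b3⟩|⟨b1,b4,b5,b6,b2,b3⟩ <;>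
  rw [a2, b2] <;>
  rcases h2 with h2|h2 <;> rcases h3 with h3|h3 <;>
  simp only [Nat.add_mod_right, Nat.succ_mod_two_eq_one_iff, Nat.succ_mod_two_eq_zero_iff, h2, h3,
    reduceCtorEq, Nat.zero_ne_one, Nat.one_ne_zero, eq_self_iff_true, true_and, and_true, false_and,
    and_false, true_or, or_true, false_or, or_false, not_false_iff, not_true] <;>
  first
    | omega
    | (constructor <;> rintro ⟨hne, h⟩ <;> casesm* _ ∨ _ <;> refine ⟨?_, ?_⟩ <;> omega)

lemma yzr_lt (n p q : ℕ) (hp : p < n) (hq : q < n) : yzr n p q < 2 * n := by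
  unfold yzr; split_ifs <;> omega

lemma yzc_lt (n p q : ℕ) (hp : p < n) (hq : q < n) : yzc n p q < 2 * n := by
  unfold yzc; split_ifs <;> omega

lemma yz_inj (n p q p' q' : ℕ) (hp : p < n) (hq : q < n) (hp' : p' < n) (hq' : q' < n)
    (h1 : yzr n p q = yzr n p' q') (h2 : yzc n p q = yzc n p' q') : p = p' ∧ q = q' := by
  unfold yzr at h1
  unfold yzc at h2
  split_ifs at h1 h2 <;> omega

/-- The embedding `Y_{n,n} ↪ Z_{2n,2n}`. -/
def yzEmb (n : ℕ) : Ygrid n n ↪g Zgrid (2 * n) (2 * n) where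
  toFun v := (⟨yzr n v.1.val v.2.val, yzr_lt n _ _ v.1.isLt v.2.isLt⟩,
              ⟨yzc n v.1.val v.2.val, yzc_lt n _ _ v.1.isLt v.2.isLt⟩)
  inj' := by
    rintro ⟨⟨p, hp⟩, ⟨q, hq⟩⟩ ⟨⟨p', hp'⟩, ⟨q', hq'⟩⟩ h
    simp only [Prod.mk.injEq, Fin.mk.injEq] at h
    simp only [Prod.mk.injEq, Fin.mk.injEq]
    exact yz_inj n p q p' q' hp hq hp' hq' h.1 h.2
  map_rel_iff' := by
    rintro ⟨⟨p, hp⟩, ⟨q, hq⟩⟩ ⟨⟨p', hp'⟩, ⟨q', hq'⟩⟩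
    simp only [Function.Embedding.coeFn_mk, Zgrid, Ygrid, SimpleGraph.fromRel_adj,
      zrel_eq, yrel_eq, ne_eq, Prod.mk.injEq, Fin.mk.injEq]
    erw [Function.Embedding.coeFn_mk]
    simp only [Prod.mk.injEq, Fin.mk.injEq]
    exact yz_adj n p q p' q' hp hq hp' hq'

set_option maxHeartbeats 1000000 in
theorem zy_adj (n p q p' q' : ℕ) (hp : p < n) (hq : q < n) (hp' : p' < n) (hq' : q' < n) :
    ((¬(zyr n p q = zyr n p' q' ∧ zyc n p q = zyc n p' q')) ∧
      (YrelN (zyr n p q + 1) (zyc n p q + 1) (zyr n p' q' + 1) (zyc n p' q' + 1) ∨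
       YrelN (zyr n p' q' + 1) (zyc n p' q' + 1) (zyr n p q + 1) (zyc n p q + 1))) ↔
    ((¬(p = p' ∧ q = q')) ∧
      (ZrelN (p + 1) (q + 1) (p' + 1) (q' + 1) ∨ ZrelN (p' + 1) (q' + 1) (p + 1) (q + 1))) := by
  unfold zyr zyc
  rcases eq_or_ne n 1 with h1 | h1
  · simp only [if_pos h1]
    simp only [ZrelN, YrelN]
    omega
  · simp only [if_neg h1]
    simp only [ZrelN, YrelN]
    have h2 : p % 2 = 0 ∨ p % 2 = 1 := Nat.mod_two_eq_zero_or_one p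
    have h3 : p' % 2 = 0 ∨ p' % 2 = 1 := Nat.mod_two_eq_zero_or_one p'
    rcases h2 with h2|h2 <;> rcases h3 with h3|h3 <;>
    simp only [Nat.add_mod_right, Nat.succ_mod_two_eq_one_iff, Nat.succ_mod_two_eq_zero_iff, h2, h3,
      reduceCtorEq, Nat.zero_ne_one, Nat.one_ne_zero, eq_self_iff_true, true_and, and_true, false_and,
      and_false, true_or, or_true, false_or, or_false, not_false_iff, not_true] <;>
    first
      | omega
      | (constructor <;> rintro ⟨hne, h⟩ <;> casesm* _ ∨ _ <;> refine ⟨?_, ?_⟩ <;> omega)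

lemma zyr_lt (n p q : ℕ) (hp : p < n) (hq : q < n) : zyr n p q < 2 * n := by
  unfold zyr; split_ifs <;> omega

lemma zyc_lt (n p q : ℕ) (hp : p < n) (hq : q < n) : zyc n p q < 2 * n := by
  unfold zyc; split_ifs <;> omega

lemma zy_inj (n p q p' q' : ℕ) (hp : p < n) (hq : q < n) (hp' : p' < n) (hq' : q' < n)
    (h1 : zyr n p q = zyr n p' q') (h2 : zyc n p q = zyc n p' q') : p = p' ∧ q = q' := by
  unfold zyr at h1
  unfold zyc at h2
  split_ifs at h1 h2 <;> omega

/-- The embedding `Z_{n,n} ↪ Y_{2n,2n}`, avoiding column index 0. -/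
def zyEmb (n : ℕ) : Zgrid n n ↪g Ygrid (2 * n) (2 * n) where
  toFun v := (⟨zyr n v.1.val v.2.val, zyr_lt n _ _ v.1.isLt v.2.isLt⟩,
              ⟨zyc n v.1.val v.2.val, zyc_lt n _ _ v.1.isLt v.2.isLt⟩)
  inj' := by
    rintro ⟨⟨p, hp⟩, ⟨q, hq⟩⟩ ⟨⟨p', hp'⟩, ⟨q', hq'⟩⟩ h
    simp only [Prod.mk.injEq, Fin.mk.injEq] at h
    simp only [Prod.mk.injEq, Fin.mk.injEq]
    exact zy_inj n p q p' q' hp hq hp' hq' h.1 h.2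
  map_rel_iff' := by
    rintro ⟨⟨p, hp⟩, ⟨q, hq⟩⟩ ⟨⟨p', hp'⟩, ⟨q', hq'⟩⟩
    simp only [Function.Embedding.coeFn_mk, Zgrid, Ygrid, SimpleGraph.fromRel_adj,
      zrel_eq, yrel_eq, ne_eq, Prod.mk.injEq, Fin.mk.injEq]
    erw [Function.Embedding.coeFn_mk]
    simp only [Prod.mk.injEq, Fin.mk.injEq]
    exact zy_adj n p q p' q' hp hq hp' hq'

/-- `Z_{2n,2n}` contains `Y_{n,n}` as an induced subgraph,
`Y_{2n,2n}` contains `Z_{n,n}` as an induced subgraph, and moreover `Z_{n,n}`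
embeds into `Y_{2n,2n}` avoiding all vertices of the bottom row (row 1,
i.e. row index 0) of `Y_{2n,2n}`. -/
theorem ZY_mutual_embeddings (n : ℕ) :
    Nonempty (Ygrid n n ↪g Zgrid (2 * n) (2 * n)) ∧
    Nonempty (Zgrid n n ↪g Ygrid (2 * n) (2 * n)) ∧
    ∃ f : Zgrid n n ↪g Ygrid (2 * n) (2 * n),
      ∀ v : Fin n × Fin n, ((f v).2 : ℕ) ≠ 0 := by
  refine ⟨⟨yzEmb n⟩, ⟨zyEmb n⟩, ⟨zyEmb n, ?_⟩⟩
  rintro ⟨⟨p, hp⟩, ⟨q, hq⟩⟩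
  show zyc n p q ≠ 0
  unfold zyc; split_ifs <;> omega
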